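/- Let g ∈ SU(2), viewed as a 2×2 complex matrix, with g ≠ 1 and g ≠ −1, and write the (real) trace of g as tr g = 2·cos θ with θ ∈ (0, π) (i.e. θ = arccos((tr g)/2)). Then the matrix exponential satisfies exp( (θ / √(4 − (tr g)²)) • (g − g⁻¹) ) = g; equivalently, exp( (θ/(2 sin θ)) • (g − g⁻¹) ) = g. -/

import Mathlib

open Matrix

lemma exp_smul_of_sq_neg_one {A : Matrix (Fin 2) (Fin 2) ℂ} (hA : A * A = -1) (θ : ℝ) :
    NormedSpace.exp (θ • A) = Real.cos θ • (1 : Matrix (Fin 2) (Fin 2) ℂ) + Real.sin θ • A := by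
  letI : SeminormedRing (Matrix (Fin 2) (Fin 2) ℂ) := Matrix.linftyOpSemiNormedRing
  letI : NormedRing (Matrix (Fin 2) (Fin 2) ℂ) := Matrix.linftyOpNormedRing
  letI : NormedAlgebra ℝ (Matrix (Fin 2) (Fin 2) ℂ) := Matrix.linftyOpNormedAlgebra
  let φ : ℂ →ₐ[ℝ] Matrix (Fin 2) (Fin 2) ℂ := Complex.liftAux A hA
  have hφc : Continuous φ := φ.toLinearMap.continuous_of_finiteDimensional
  have h1 : (θ • A) = φ (θ • Complex.I) := by
    simp [φ, Complex.liftAux_apply]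
  rw [h1]
  erw [← NormedSpace.map_exp φ hφc]
  have h2 : NormedSpace.exp (θ • Complex.I) = Complex.exp ((θ:ℂ) * Complex.I) := by
    rw [Complex.exp_eq_exp_ℂ, Complex.real_smul]
  rw [h2, Complex.exp_mul_I, ← Complex.ofReal_cos, ← Complex.ofReal_sin]
  simp [φ, Complex.liftAux_apply, Algebra.algebraMap_eq_smul_one,
    Complex.cos_ofReal_re, Complex.sin_ofReal_re]

/-- `SU2` is the special unitary group of 2×2 complex matrices,
identified with the 3-sphere `S³`. -/
abbrev SU2 : Submonoid (Matrix (Fin 2) (Fin 2) ℂ) := Matrix.specialUnitaryGroup (Fin 2) ℂ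

noncomputable instance : Group SU2 :=
  { (inferInstance : Monoid SU2) with
    inv := fun A => ⟨star A.1, by
      obtain ⟨hu, hd⟩ := Matrix.mem_specialUnitaryGroup_iff.mp A.2
      refine Matrix.mem_specialUnitaryGroup_iff.mpr ⟨Unitary.star_mem hu, ?_⟩
      rw [Matrix.star_eq_conjTranspose, Matrix.det_conjTranspose, hd, star_one]⟩
    inv_mul_cancel := fun A => Subtype.ext A.2.1.1 }

/-- For `g ∈ SU(2)` with `g ≠ ±1` and `tr g = 2 cos θ`, `θ ∈ (0, π)`, one has
`exp((θ/√(4 − (tr g)²)) (g − g⁻¹)) = g`, equivalently `exp((θ/(2 sin θ)) (g − g⁻¹)) = g`. -/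
theorem exp_scaled_sub_inv_eq_self (g : SU2) (θ : ℝ) (hθ : θ ∈ Set.Ioo 0 Real.pi)
    (hg1 : (g : Matrix (Fin 2) (Fin 2) ℂ) ≠ 1)
    (hgm1 : (g : Matrix (Fin 2) (Fin 2) ℂ) ≠ -1)
    (htr : ((g : Matrix (Fin 2) (Fin 2) ℂ)).trace = ((2 * Real.cos θ : ℝ) : ℂ)) :
    NormedSpace.exp ((θ / Real.sqrt (4 - (2 * Real.cos θ) ^ 2)) •
        ((g : Matrix (Fin 2) (Fin 2) ℂ) - ((g⁻¹ : SU2) : Matrix (Fin 2) (Fin 2) ℂ)))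
      = (g : Matrix (Fin 2) (Fin 2) ℂ) ∧
    NormedSpace.exp ((θ / (2 * Real.sin θ)) •
        ((g : Matrix (Fin 2) (Fin 2) ℂ) - ((g⁻¹ : SU2) : Matrix (Fin 2) (Fin 2) ℂ)))
      = (g : Matrix (Fin 2) (Fin 2) ℂ) := by
  set G : Matrix (Fin 2) (Fin 2) ℂ := (g : Matrix (Fin 2) (Fin 2) ℂ) with hG
  set c : ℝ := Real.cos θ with hc
  set s : ℝ := Real.sin θ with hs
  have hspos : 0 < s := Real.sin_pos_of_pos_of_lt_pi hθ.1 hθ.2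
  have hsne : s ≠ 0 := ne_of_gt hspos
  have hsc : s ^ 2 + c ^ 2 = 1 := Real.sin_sq_add_cos_sq θ
  have hdet : G.det = 1 := g.2.2
  have hsGG : star G * G = 1 := g.2.1.1
  have hcoe : ((g⁻¹ : SU2) : Matrix (Fin 2) (Fin 2) ℂ) = star G := rfl
  have hadj1 : G * G.adjugate = 1 := by
    have := Matrix.mul_adjugate G; rwa [hdet, one_smul] at this
  have hstar : star G = G.adjugate := by
    calc star G = star G * (G * G.adjugate) := by rw [hadj1, mul_one]
    _ = (star G * G) * G.adjugate := by rw [mul_assoc]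
    _ = G.adjugate := by rw [hsGG, one_mul]
  have hadj2 : G.adjugate = G.trace • (1 : Matrix (Fin 2) (Fin 2) ℂ) - G := by
    rw [Matrix.adjugate_fin_two]
    ext i j
    fin_cases i <;> fin_cases j <;>
      simp [Matrix.trace_fin_two, Matrix.one_apply]
  have hstar2 : star G = (2 * c : ℝ) • (1 : Matrix (Fin 2) (Fin 2) ℂ) - G := by
    rw [hstar, hadj2, htr, Complex.coe_smul]
  have hGG : G * G = (2 * c : ℝ) • G - 1 := by
    have h := hadj1
    rw [hadj2, htr, Complex.coe_smul, mul_sub, mul_smul_comm, mul_one] at h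
    linear_combination (norm := abel) -h
  -- the traceless direction
  set X : Matrix (Fin 2) (Fin 2) ℂ := G - c • 1 with hX
  have hXX : X * X = (-(s ^ 2)) • (1 : Matrix (Fin 2) (Fin 2) ℂ) := by
    have h1 : X * X = G * G - (2 * c) • G + (c ^ 2) • (1 : Matrix (Fin 2) (Fin 2) ℂ) := by
      rw [hX]
      simp only [sub_mul, mul_sub, smul_mul_assoc, mul_smul_comm, mul_one, one_mul, smul_smul]
      module
    rw [h1, hGG]
    have h2 : -(s ^ 2) = c ^ 2 - 1 := by nlinarith
    rw [h2]
    module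
  set J : Matrix (Fin 2) (Fin 2) ℂ := s⁻¹ • X with hJ
  have hJJ : J * J = -1 := by
    rw [hJ, smul_mul_smul_comm, hXX, smul_smul]
    have : s⁻¹ * s⁻¹ * -(s ^ 2) = -1 := by field_simp
    rw [this, neg_smul, one_smul]
  have hexp : NormedSpace.exp (θ • J) = G := by
    rw [exp_smul_of_sq_neg_one hJJ, hJ, smul_smul, mul_inv_cancel₀ hsne, one_smul, hX]
    module
  have hdiff : G - ((g⁻¹ : SU2) : Matrix (Fin 2) (Fin 2) ℂ) = (2 : ℝ) • X := by
    rw [hcoe, hstar2, hX]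
    module
  have hmain : NormedSpace.exp ((θ / (2 * s)) •
      (G - ((g⁻¹ : SU2) : Matrix (Fin 2) (Fin 2) ℂ))) = G := by
    rw [hdiff, smul_smul]
    have : θ / (2 * s) * 2 = θ * s⁻¹ := by field_simp
    rw [this, ← smul_smul, ← hJ]
    exact hexp
  refine ⟨?_, hmain⟩
  have hsqrt : Real.sqrt (4 - (2 * c) ^ 2) = 2 * s := by
    have h4 : 4 - (2 * c) ^ 2 = (2 * s) ^ 2 := by nlinarith
    rw [h4, Real.sqrt_sq (by positivity)]
  rw [hsqrt]
  exact hmain
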